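/- If u, v ∈ ℝ satisfy u² ≠ v², then the point e = (0, 0, u, 0, 0, v) is an equilibrium of the so(4) free rigid body system and is Lyapunov stable. -/

import Mathlib

noncomputable section

/-- The right-hand side of the so(4) free rigid body system on ℝ⁶,
coordinates `(x1,x2,x3,y1,y2,y3) = (p 0, p 1, p 2, p 3, p 4, p 5)`. -/
def vf (l1 l2 l3 l4 : ℝ) (p : Fin 6 → ℝ) : Fin 6 → ℝ :=
  ![(1/(l1+l2) - 1/(l1+l3)) * (p 1 * p 2) + (1/(l3+l4) - 1/(l2+l4)) * (p 4 * p 5),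
    (1/(l2+l3) - 1/(l1+l2)) * (p 0 * p 2) + (1/(l1+l4) - 1/(l3+l4)) * (p 3 * p 5),
    (1/(l1+l3) - 1/(l2+l3)) * (p 0 * p 1) + (1/(l2+l4) - 1/(l1+l4)) * (p 3 * p 4),
    (1/(l3+l4) - 1/(l1+l3)) * (p 1 * p 5) + (1/(l1+l2) - 1/(l2+l4)) * (p 2 * p 4),
    (1/(l2+l3) - 1/(l3+l4)) * (p 0 * p 5) + (1/(l1+l4) - 1/(l1+l2)) * (p 2 * p 3),
    (1/(l2+l4) - 1/(l2+l3)) * (p 0 * p 4) + (1/(l1+l3) - 1/(l1+l4)) * (p 1 * p 3)]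

/-- Lyapunov stability of an equilibrium `e` of the so(4) free rigid body system:
for every ε > 0 there is δ > 0 such that every differentiable solution starting
δ-close to `e` stays ε-close to `e` for all t ≥ 0. -/
def IsLyapunovStable (l1 l2 l3 l4 : ℝ) (e : Fin 6 → ℝ) : Prop :=
  ∀ ε > 0, ∃ δ > 0, ∀ f : ℝ → (Fin 6 → ℝ),
    (∀ t : ℝ, HasDerivAt f (vf l1 l2 l3 l4 (f t)) t) →
    ‖f 0 - e‖ < δ → ∀ t ≥ 0, ‖f t - e‖ < ε

/-- A Lyapunov function for the equilibrium `(0,0,u,0,0,v)`: a positive-definite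
combination of first integrals of the flow. -/
def lyapV (l1 l2 l3 l4 u v : ℝ) (p : Fin 6 → ℝ) : ℝ :=
  ((l1-l3)*(l1-l4)*(l2-l4)/(l2+l3)) * p 0 ^ 2
  + ((l1-l4)*(l2-l3)*(l2-l4)/(l1+l3)) * p 1 ^ 2
  + ((l1-l3)*(l2-l3)*(l2-l4)/(l1+l4)) * p 3 ^ 2
  + ((l1-l3)*(l1-l4)*(l2-l3)/(l2+l4)) * p 4 ^ 2
  + (p 0 ^ 2 + p 1 ^ 2 + p 2 ^ 2 + p 3 ^ 2 + p 4 ^ 2 + p 5 ^ 2 - (u^2+v^2)) ^ 2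
  + (p 0 * p 3 + p 1 * p 4 + p 2 * p 5 - u*v) ^ 2

lemma lyapV_continuous (l1 l2 l3 l4 u v : ℝ) : Continuous (lyapV l1 l2 l3 l4 u v) := by
  unfold lyapV; fun_prop

/-- `lyapV` is constant along solutions. -/
lemma lyapV_const (l1 l2 l3 l4 u v : ℝ)
    (n12 : l1+l2 ≠ 0) (n13 : l1+l3 ≠ 0) (n14 : l1+l4 ≠ 0)
    (n23 : l2+l3 ≠ 0) (n24 : l2+l4 ≠ 0) (n34 : l3+l4 ≠ 0)
    (f : ℝ → Fin 6 → ℝ) (hf : ∀ t, HasDerivAt f (vf l1 l2 l3 l4 (f t)) t) (t : ℝ) :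
    lyapV l1 l2 l3 l4 u v (f t) = lyapV l1 l2 l3 l4 u v (f 0) := by
  have hc1 : ((l1-l3)*(l1-l4)*(l2-l4)/(l2+l3)) * (1/(l1+l2) - 1/(l1+l3))
      + ((l1-l4)*(l2-l3)*(l2-l4)/(l1+l3)) * (1/(l2+l3) - 1/(l1+l2)) = 0 := by
    field_simp; ring
  have hc2 : ((l1-l4)*(l2-l3)*(l2-l4)/(l1+l3)) * (1/(l1+l4) - 1/(l3+l4))
      + ((l1-l3)*(l2-l3)*(l2-l4)/(l1+l4)) * (1/(l3+l4) - 1/(l1+l3)) = 0 := by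
    field_simp; ring
  have hc3 : ((l1-l3)*(l2-l3)*(l2-l4)/(l1+l4)) * (1/(l1+l2) - 1/(l2+l4))
      + ((l1-l3)*(l1-l4)*(l2-l3)/(l2+l4)) * (1/(l1+l4) - 1/(l1+l2)) = 0 := by
    field_simp; ring
  have hc4 : ((l1-l3)*(l1-l4)*(l2-l4)/(l2+l3)) * (1/(l3+l4) - 1/(l2+l4))
      + ((l1-l3)*(l1-l4)*(l2-l3)/(l2+l4)) * (1/(l2+l3) - 1/(l3+l4)) = 0 := by
    field_simp; ring
  have key : ∀ s : ℝ, HasDerivAt (fun w => lyapV l1 l2 l3 l4 u v (f w)) 0 s := by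
    intro s
    have h0 : HasDerivAt (fun w => f w 0)
        ((1/(l1+l2) - 1/(l1+l3)) * (f s 1 * f s 2) + (1/(l3+l4) - 1/(l2+l4)) * (f s 4 * f s 5)) s := by
      simpa [vf] using hasDerivAt_pi.1 (hf s) 0
    have h1 : HasDerivAt (fun w => f w 1)
        ((1/(l2+l3) - 1/(l1+l2)) * (f s 0 * f s 2) + (1/(l1+l4) - 1/(l3+l4)) * (f s 3 * f s 5)) s := by
      simpa [vf] using hasDerivAt_pi.1 (hf s) 1
    have h2 : HasDerivAt (fun w => f w 2)
        ((1/(l1+l3) - 1/(l2+l3)) * (f s 0 * f s 1) + (1/(l2+l4) - 1/(l1+l4)) * (f s 3 * f s 4)) s := by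
      simpa [vf] using hasDerivAt_pi.1 (hf s) 2
    have h3 : HasDerivAt (fun w => f w 3)
        ((1/(l3+l4) - 1/(l1+l3)) * (f s 1 * f s 5) + (1/(l1+l2) - 1/(l2+l4)) * (f s 2 * f s 4)) s := by
      simpa [vf] using hasDerivAt_pi.1 (hf s) 3
    have h4 : HasDerivAt (fun w => f w 4)
        ((1/(l2+l3) - 1/(l3+l4)) * (f s 0 * f s 5) + (1/(l1+l4) - 1/(l1+l2)) * (f s 2 * f s 3)) s := by
      simpa [vf] using hasDerivAt_pi.1 (hf s) 4
    have h5 : HasDerivAt (fun w => f w 5)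
        ((1/(l2+l4) - 1/(l2+l3)) * (f s 0 * f s 4) + (1/(l1+l3) - 1/(l1+l4)) * (f s 1 * f s 3)) s := by
      simpa [vf] using hasDerivAt_pi.1 (hf s) 5
    have HQ := ((((h0.pow 2).const_mul ((l1-l3)*(l1-l4)*(l2-l4)/(l2+l3))).add
        ((h1.pow 2).const_mul ((l1-l4)*(l2-l3)*(l2-l4)/(l1+l3)))).add
        ((h3.pow 2).const_mul ((l1-l3)*(l2-l3)*(l2-l4)/(l1+l4)))).add
        ((h4.pow 2).const_mul ((l1-l3)*(l1-l4)*(l2-l3)/(l2+l4)))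
    have HC1 := ((((((((h0.pow 2).add (h1.pow 2)).add (h2.pow 2)).add (h3.pow 2)).add
        (h4.pow 2)).add (h5.pow 2)).sub_const (u^2+v^2)).pow 2)
    have HC2 := (((((h0.mul h3).add (h1.mul h4)).add (h2.mul h5)).sub_const (u*v)).pow 2)
    have H := (HQ.add HC1).add HC2
    simp only [lyapV]
    refine HasDerivAt.congr_deriv H (Eq.symm ?_)
    linear_combination (-(2*f s 0*f s 1*f s 2))*hc1 + (-(2*f s 1*f s 3*f s 5))*hc2
      + (-(2*f s 2*f s 3*f s 4))*hc3 + (-(2*f s 0*f s 4*f s 5))*hc4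
  exact is_const_of_deriv_eq_zero (fun s => (key s).differentiableAt)
    (fun s => (key s).deriv) t 0

/-- `lyapV` is positive near the equilibrium, away from it. -/
lemma lyapV_pos (l1 l2 l3 l4 : ℝ) (h12 : l2 < l1) (h23 : l3 < l2) (h34 : l4 < l3)
    (s13 : 0 < l1 + l3) (s14 : 0 < l1 + l4) (s23 : 0 < l2 + l3) (s24 : 0 < l2 + l4)
    (u v : ℝ) (p : Fin 6 → ℝ) (hne : p ≠ ![0, 0, u, 0, 0, v])
    (hb2 : |p 2 - u| < min |u - v| |u + v|) (hb5 : |p 5 - v| < min |u - v| |u + v|) :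
    0 < lyapV l1 l2 l3 l4 u v p := by
  have hA : 0 < (l1-l3)*(l1-l4)*(l2-l4)/(l2+l3) :=
    div_pos (mul_pos (mul_pos (by linarith) (by linarith)) (by linarith)) s23
  have hB : 0 < (l1-l4)*(l2-l3)*(l2-l4)/(l1+l3) :=
    div_pos (mul_pos (mul_pos (by linarith) (by linarith)) (by linarith)) s13
  have hC : 0 < (l1-l3)*(l2-l3)*(l2-l4)/(l1+l4) :=
    div_pos (mul_pos (mul_pos (by linarith) (by linarith)) (by linarith)) s14
  have hD : 0 < (l1-l3)*(l1-l4)*(l2-l3)/(l2+l4) :=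
    div_pos (mul_pos (mul_pos (by linarith) (by linarith)) (by linarith)) s24
  have t1 : 0 ≤ ((l1-l3)*(l1-l4)*(l2-l4)/(l2+l3)) * p 0 ^ 2 := mul_nonneg hA.le (sq_nonneg _)
  have t2 : 0 ≤ ((l1-l4)*(l2-l3)*(l2-l4)/(l1+l3)) * p 1 ^ 2 := mul_nonneg hB.le (sq_nonneg _)
  have t3 : 0 ≤ ((l1-l3)*(l2-l3)*(l2-l4)/(l1+l4)) * p 3 ^ 2 := mul_nonneg hC.le (sq_nonneg _)
  have t4 : 0 ≤ ((l1-l3)*(l1-l4)*(l2-l3)/(l2+l4)) * p 4 ^ 2 := mul_nonneg hD.le (sq_nonneg _)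
  have t5 : 0 ≤ (p 0 ^ 2 + p 1 ^ 2 + p 2 ^ 2 + p 3 ^ 2 + p 4 ^ 2 + p 5 ^ 2 - (u^2+v^2)) ^ 2 :=
    sq_nonneg _
  have t6 : 0 ≤ (p 0 * p 3 + p 1 * p 4 + p 2 * p 5 - u*v) ^ 2 := sq_nonneg _
  by_contra hV
  push_neg at hV
  rw [lyapV] at hV
  have e1 : ((l1-l3)*(l1-l4)*(l2-l4)/(l2+l3)) * p 0 ^ 2 = 0 := le_antisymm (by linarith) t1
  have e2 : ((l1-l4)*(l2-l3)*(l2-l4)/(l1+l3)) * p 1 ^ 2 = 0 := le_antisymm (by linarith) t2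
  have e3 : ((l1-l3)*(l2-l3)*(l2-l4)/(l1+l4)) * p 3 ^ 2 = 0 := le_antisymm (by linarith) t3
  have e4 : ((l1-l3)*(l1-l4)*(l2-l3)/(l2+l4)) * p 4 ^ 2 = 0 := le_antisymm (by linarith) t4
  have e5 : (p 0 ^ 2 + p 1 ^ 2 + p 2 ^ 2 + p 3 ^ 2 + p 4 ^ 2 + p 5 ^ 2 - (u^2+v^2)) ^ 2 = 0 :=
    le_antisymm (by linarith) t5
  have e6 : (p 0 * p 3 + p 1 * p 4 + p 2 * p 5 - u*v) ^ 2 = 0 := le_antisymm (by linarith) t6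
  have hp0 : p 0 = 0 := by
    have := (mul_eq_zero.1 e1).resolve_left (ne_of_gt hA)
    exact pow_eq_zero_iff (two_ne_zero) |>.1 this
  have hp1 : p 1 = 0 := by
    have := (mul_eq_zero.1 e2).resolve_left (ne_of_gt hB)
    exact pow_eq_zero_iff (two_ne_zero) |>.1 this
  have hp3 : p 3 = 0 := by
    have := (mul_eq_zero.1 e3).resolve_left (ne_of_gt hC)
    exact pow_eq_zero_iff (two_ne_zero) |>.1 this
  have hp4 : p 4 = 0 := by
    have := (mul_eq_zero.1 e4).resolve_left (ne_of_gt hD)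
    exact pow_eq_zero_iff (two_ne_zero) |>.1 this
  have eA : p 2 ^ 2 + p 5 ^ 2 - (u^2+v^2) = 0 := by
    have := pow_eq_zero_iff (n := 2) two_ne_zero |>.1 e5
    rw [hp0, hp1, hp3, hp4] at this; linarith [this]
  have eB : p 2 * p 5 - u * v = 0 := by
    have := pow_eq_zero_iff (n := 2) two_ne_zero |>.1 e6
    rw [hp0, hp1, hp3, hp4] at this; linarith [this]
  have hsum : p 2 + p 5 = u + v := by
    have hz : (p 2 + p 5 - (u + v)) * (p 2 + p 5 + (u + v)) = 0 := by
      linear_combination eA + 2 * eB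
    rcases mul_eq_zero.1 hz with h | h
    · linarith
    · exfalso
      have habs : |p 2 - u + (p 5 - v)| ≤ |p 2 - u| + |p 5 - v| := abs_add_le _ _
      have hrw : p 2 - u + (p 5 - v) = -(2 * (u + v)) := by linarith
      rw [hrw, abs_neg] at habs
      have h2 : |2 * (u + v)| = 2 * |u + v| := by rw [abs_mul]; norm_num
      rw [h2] at habs
      have hm : min |u - v| |u + v| ≤ |u + v| := min_le_right _ _
      linarith
  have hdiff : p 2 - p 5 = u - v := by
    have hz : (p 2 - p 5 - (u - v)) * (p 2 - p 5 + (u - v)) = 0 := by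
      linear_combination eA - 2 * eB
    rcases mul_eq_zero.1 hz with h | h
    · linarith
    · exfalso
      have habs : |p 2 - u - (p 5 - v)| ≤ |p 2 - u| + |p 5 - v| := abs_sub _ _
      have hrw : p 2 - u - (p 5 - v) = -(2 * (u - v)) := by linarith
      rw [hrw, abs_neg] at habs
      have h2 : |2 * (u - v)| = 2 * |u - v| := by rw [abs_mul]; norm_num
      rw [h2] at habs
      have hm : min |u - v| |u + v| ≤ |u - v| := min_le_left _ _
      linarith
  have hp2 : p 2 = u := by linarith
  have hp5 : p 5 = v := by linarith
  apply hne
  funext i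
  fin_cases i
  exacts [hp0, hp1, hp2, hp3, hp4, hp5]

/-- the equilibria `(0,0,u,0,0,v)` with `u² ≠ v²` are Lyapunov stable. -/
theorem t3_equilibria_stable
    (l1 l2 l3 l4 : ℝ) (h12 : l2 < l1) (h23 : l3 < l2) (h34 : l4 < l3)
    (s12 : 0 < l1 + l2) (s13 : 0 < l1 + l3) (s14 : 0 < l1 + l4)
    (s23 : 0 < l2 + l3) (s24 : 0 < l2 + l4) (s34 : 0 < l3 + l4)
    (u v : ℝ) (huv : u ^ 2 ≠ v ^ 2) :
    vf l1 l2 l3 l4 ![0, 0, u, 0, 0, v] = 0 ∧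
      IsLyapunovStable l1 l2 l3 l4 ![0, 0, u, 0, 0, v] := by
  constructor
  · funext i
    fin_cases i <;> simp [vf]
  · intro ε hε
    set e : Fin 6 → ℝ := ![0, 0, u, 0, 0, v] with he
    have huv1 : u ≠ v := fun h => huv (by rw [h])
    have huv2 : u + v ≠ 0 := fun h => huv (by rw [show u = -v by linarith]; ring)
    have hr : 0 < min |u - v| |u + v| :=
      lt_min (abs_pos.2 (sub_ne_zero.2 huv1)) (abs_pos.2 huv2)
    set r := min |u - v| |u + v| with hrdef
    set ε₀ := min ε r / 2 with hε₀def
    have hminpos : 0 < min ε r := lt_min hε hr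
    have hε₀ : 0 < ε₀ := by positivity
    have hε₀ε : ε₀ < ε := by
      have := min_le_left ε r; simp only [hε₀def]; linarith
    have hε₀r : ε₀ < r := by
      have := min_le_right ε r; simp only [hε₀def]; linarith
    have hVe : lyapV l1 l2 l3 l4 u v e = 0 := by
      simp only [he, lyapV,
        show (![(0:ℝ), 0, u, 0, 0, v]) 0 = 0 from rfl,
        show (![(0:ℝ), 0, u, 0, 0, v]) 1 = 0 from rfl,
        show (![(0:ℝ), 0, u, 0, 0, v]) 2 = u from rfl,
        show (![(0:ℝ), 0, u, 0, 0, v]) 3 = 0 from rfl,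
        show (![(0:ℝ), 0, u, 0, 0, v]) 4 = 0 from rfl,
        show (![(0:ℝ), 0, u, 0, 0, v]) 5 = v from rfl]
      ring
    -- minimum of V on the sphere of radius ε₀
    obtain ⟨q, hq, hqmin⟩ := (isCompact_sphere e ε₀).exists_isMinOn
      (NormedSpace.sphere_nonempty.2 hε₀.le)
      ((lyapV_continuous l1 l2 l3 l4 u v).continuousOn)
    have hqd : dist q e = ε₀ := Metric.mem_sphere.1 hq
    have hqnorm : ‖q - e‖ = ε₀ := by rwa [dist_eq_norm] at hqd
    have hqe : q ≠ e := by
      intro h; rw [h] at hqd; simp at hqd; exact absurd hqd.symm (ne_of_gt hε₀)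
    have hcomp : ∀ i, |q i - e i| < r := by
      intro i
      have h1 : |q i - e i| ≤ ‖q - e‖ := by
        simpa [Real.norm_eq_abs] using norm_le_pi_norm (q - e) i
      rw [hqnorm] at h1
      linarith
    have hm : 0 < lyapV l1 l2 l3 l4 u v q := by
      refine lyapV_pos l1 l2 l3 l4 h12 h23 h34 s13 s14 s23 s24 u v q (by rwa [← he]) ?_ ?_
      · have := hcomp 2; rw [hrdef] at this
        simpa [he] using this
      · have := hcomp 5; rw [hrdef] at this
        simpa [he] using this
    -- δ from continuity at e
    obtain ⟨δ₀, hδ₀, hball⟩ := Metric.continuousAt_iff.1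
      ((lyapV_continuous l1 l2 l3 l4 u v).continuousAt (x := e)) _ hm
    refine ⟨min δ₀ ε₀, lt_min hδ₀ hε₀, ?_⟩
    intro f hf hf0 t ht
    have hfC : Continuous f := continuous_iff_continuousAt.2 fun s => (hf s).continuousAt
    have hcons : ∀ s : ℝ, lyapV l1 l2 l3 l4 u v (f s) = lyapV l1 l2 l3 l4 u v (f 0) :=
      lyapV_const l1 l2 l3 l4 u v (ne_of_gt s12) (ne_of_gt s13) (ne_of_gt s14)
        (ne_of_gt s23) (ne_of_gt s24) (ne_of_gt s34) f hf
    have hVf0 : lyapV l1 l2 l3 l4 u v (f 0) < lyapV l1 l2 l3 l4 u v q := by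
      have hd : dist (f 0) e < δ₀ := by
        rw [dist_eq_norm]; exact lt_of_lt_of_le hf0 (min_le_left _ _)
      have := hball hd
      rw [Real.dist_eq, hVe, sub_zero] at this
      exact lt_of_le_of_lt (le_abs_self _) this
    by_contra hcon
    push_neg at hcon
    have hnc : Continuous fun s : ℝ => ‖f s - e‖ := (hfC.sub continuous_const).norm
    have hmem : ε₀ ∈ Set.Icc (‖f 0 - e‖) (‖f t - e‖) :=
      ⟨le_of_lt (lt_of_lt_of_le hf0 (min_le_right _ _)), le_trans hε₀ε.le hcon⟩
    obtain ⟨s, _, hseq⟩ := intermediate_value_Icc ht hnc.continuousOn hmem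
    have hsph : f s ∈ Metric.sphere e ε₀ := by
      rw [Metric.mem_sphere, dist_eq_norm]; exact hseq
    have hge : lyapV l1 l2 l3 l4 u v q ≤ lyapV l1 l2 l3 l4 u v (f s) := hqmin hsph
    rw [hcons s] at hge
    exact absurd hVf0 (not_lt.2 hge)
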